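/- Let μ = (μ_1 ≥ … ≥ μ_n ≥ 0) be a partition and λ = 2μ = (2μ_1,…,2μ_n) its horizontal duplication. Then the principal specialization of the Schur polynomial satisfies s_λ(q^{2(n-1)}, q^{2(n-2)},…,1) = q^{4Σ_{k=1}^n (k-1)μ_k} · Π_{s∈μ} [ (1−q^{2(2a'(s)−ℓ'(s)+n)})(1−q^{2(2a'(s)−ℓ'(s)+n+1)}) / ((1−q^{2(2a(s)+ℓ(s)+1)})(1−q^{2(2a(s)+ℓ(s)+2)})) ]. -/

import Mathlib

noncomputable section

/-- The ground field `ℚ(q)`. -/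
abbrev K1 : Type := RatFunc ℚ

/-- The indeterminate `q`. -/
noncomputable def q1 : K1 := RatFunc.X

/-- The conjugate partition: `ν'_{j+1} = #{i : ν_i > j}` (0-based `j`). -/
def conjP (m : ℕ) (ν : Fin m → ℕ) (j : ℕ) : ℕ :=
  (Finset.univ.filter fun i : Fin m => j < ν i).card

/-- The principal specialization `s_ν(q^{2(m-1)},…,q^2,1)` of the Schur polynomial in `m`
variables, via the hook–content formula
`s_ν(1,Q,…,Q^{m-1}) = Q^{Σ(k-1)ν_k} Π_{p∈ν} (1−Q^{c(p)})/(1−Q^{h(p)})` with `Q = q²`,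
`c(p) = a'(p)−ℓ'(p)+m` and `h(p) = a(p)+ℓ(p)+1`. Boxes are 0-based pairs `(i,j)`. -/
noncomputable def schurPrincipal (m : ℕ) (ν : Fin m → ℕ) : K1 :=
  q1 ^ (2 * ∑ i : Fin m, (i : ℤ) * (ν i : ℤ)) *
    ∏ i : Fin m, ∏ j ∈ Finset.range (ν i),
      (1 - q1 ^ (2 * ((j : ℤ) - (i : ℤ) + (m : ℤ)))) /
        (1 - q1 ^ (2 * (((ν i : ℤ) - (j : ℤ) - 1) + ((conjP m ν j : ℤ) - (i : ℤ) - 1) + 1)))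


lemma prod_double {M : Type*} [CommMonoid M] (m : ℕ) (f : ℕ → M) :
    ∏ j ∈ Finset.range (2 * m), f j = ∏ j ∈ Finset.range m, (f (2 * j) * f (2 * j + 1)) := by
  induction m with
  | zero => simp
  | succ k ih =>
      rw [Nat.mul_succ, Finset.prod_range_succ, Finset.prod_range_succ, Finset.prod_range_succ, ih,
        mul_assoc]

/-- for a partition `μ` and its horizontal duplication `λ = 2μ`,
`s_λ(q^{2(n-1)},…,1) = q^{4Σ(k-1)μ_k} Π_{s∈μ}
(1−q^{2(2a'−ℓ'+n)})(1−q^{2(2a'−ℓ'+n+1)}) / ((1−q^{2(2a+ℓ+1)})(1−q^{2(2a+ℓ+2)}))`. -/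
theorem stmt_14 (n : ℕ) (μ : Fin n → ℕ) (hμ : Antitone μ) :
    schurPrincipal n (fun i => 2 * μ i) =
      q1 ^ (4 * ∑ i : Fin n, (i : ℤ) * (μ i : ℤ)) *
        ∏ i : Fin n, ∏ j ∈ Finset.range (μ i),
          ((1 - q1 ^ (2 * (2 * (j : ℤ) - (i : ℤ) + (n : ℤ)))) *
              (1 - q1 ^ (2 * (2 * (j : ℤ) - (i : ℤ) + (n : ℤ) + 1)))) /
            ((1 - q1 ^ (2 * (2 * ((μ i : ℤ) - (j : ℤ) - 1) + ((conjP n μ j : ℤ) - (i : ℤ) - 1) + 1))) *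
              (1 - q1 ^ (2 * (2 * ((μ i : ℤ) - (j : ℤ) - 1) + ((conjP n μ j : ℤ) - (i : ℤ) - 1) + 2)))) := by
  unfold schurPrincipal
  have hc1 : ∀ j, conjP n (fun i => 2 * μ i) (2 * j) = conjP n μ j := by
    intro j; unfold conjP; congr 1
    apply Finset.filter_congr; intro i _; simp only; omega
  have hc2 : ∀ j, conjP n (fun i => 2 * μ i) (2 * j + 1) = conjP n μ j := by
    intro j; unfold conjP; congr 1
    apply Finset.filter_congr; intro i _; simp only; omega
  congr 1
  · congr 1
    push_cast
    rw [Finset.mul_sum, Finset.mul_sum]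
    exact Finset.sum_congr rfl fun i _ => by ring
  · apply Finset.prod_congr rfl; intro i _
    rw [prod_double]
    apply Finset.prod_congr rfl; intro j hj
    rw [hc1, hc2, div_mul_div_comm, mul_comm
      (1 - q1 ^ (2 * (((2 * μ i : ℕ) : ℤ) - ((2 * j : ℕ) : ℤ) - 1 + (((conjP n μ j : ℕ) : ℤ) - (i : ℤ) - 1) + 1)))]
    congr 3 <;> push_cast <;> ring


end
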